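/- For every natural number i > 0, ∫_0^{1/(3^i+1)} f(t) dt = (2^(i-1) / 9^i) · ((3^i - 1) / (3^i + 1)) · (1 / (1 - (2/9)^i)). -/

import Mathlib

open intervalIntegral Set

set_option maxHeartbeats 2000000 in
theorem bourbaki_stmt (f : ℝ → ℝ)
    (hcont : ContinuousOn f (Set.Icc 0 1))
    (h0 : f 0 = 0) (h1 : f 1 = 1)
    (hw1 : ∀ x ∈ Set.Icc (0:ℝ) 1, f (x / 3) = (2/3) * f x)
    (hw2 : ∀ x ∈ Set.Icc (0:ℝ) 1, f ((2 - x) / 3) = (1/3) * (1 + f x))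
    (hw3 : ∀ x ∈ Set.Icc (0:ℝ) 1, f ((2 + x) / 3) = 1/3 + (2/3) * f x) :
    ∀ i : ℕ, 0 < i → ∫ t in (0:ℝ)..(1 / (3 ^ i + 1)), f t = (2 ^ (i - 1) / 9 ^ i) * ((3 ^ i - 1) / (3 ^ i + 1)) * (1 / (1 - (2/9) ^ i)) := by
  -- integrability
  have hint : ∀ u v : ℝ, u ∈ Icc (0:ℝ) 1 → v ∈ Icc (0:ℝ) 1 →
      IntervalIntegrable f MeasureTheory.volume u v := by
    intro u v hu hv
    apply ContinuousOn.intervalIntegrable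
    exact hcont.mono (Set.uIcc_subset_Icc hu hv)
  -- scaling near 0
  have FA : ∀ b : ℝ, 0 ≤ b → 3*b ≤ 1 →
      (∫ t in (0:ℝ)..b, f t) = (2/9) * ∫ t in (0:ℝ)..(3*b), f t := by
    intro b hb hb1
    have e1 : (∫ x in (0:ℝ)..(3*b), f (x/3)) = 3 * ∫ t in (0:ℝ)..b, f t := by
      rw [integral_comp_div f (by norm_num : (3:ℝ) ≠ 0)]
      norm_num [smul_eq_mul]
    have e2 : (∫ x in (0:ℝ)..(3*b), f (x/3)) = ∫ x in (0:ℝ)..(3*b), (2/3) * f x := by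
      apply intervalIntegral.integral_congr
      intro x hx
      rw [Set.uIcc_of_le (by linarith : (0:ℝ) ≤ 3*b)] at hx
      exact hw1 x ⟨hx.1, le_trans hx.2 hb1⟩
    rw [intervalIntegral.integral_const_mul] at e2
    linarith [e1, e2]
  -- scaling near 1
  have GB : ∀ b : ℝ, 0 ≤ b → 3*b ≤ 1 →
      (∫ t in (1-b)..(1:ℝ), f t) = b/3 + (2/9) * ∫ t in (1-3*b)..(1:ℝ), f t := by
    intro b hb hb1
    have e1 : (∫ x in (1-3*b)..(1:ℝ), f ((2+x)/3)) = 3 * ∫ t in (1-b)..(1:ℝ), f t := by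
      rw [integral_comp_add_left (fun y => f (y/3)) 2]
      rw [integral_comp_div f (by norm_num : (3:ℝ) ≠ 0)]
      have : (2 + (1-3*b))/3 = 1 - b := by ring
      rw [this]
      norm_num [smul_eq_mul]
    have e2 : (∫ x in (1-3*b)..(1:ℝ), f ((2+x)/3))
        = ∫ x in (1-3*b)..(1:ℝ), (1/3 + (2/3) * f x) := by
      apply intervalIntegral.integral_congr
      intro x hx
      rw [Set.uIcc_of_le (by linarith : (1-3*b:ℝ) ≤ 1)] at hx
      exact hw3 x ⟨by linarith [hx.1], hx.2⟩
    have hint' : IntervalIntegrable (fun x => (2/3) * f x) MeasureTheory.volume (1-3*b) 1 :=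
      (hint (1-3*b) 1 ⟨by linarith, by linarith⟩ ⟨by norm_num, le_refl 1⟩).const_mul _
    rw [intervalIntegral.integral_add (_root_.intervalIntegrable_const) hint',
      intervalIntegral.integral_const, intervalIntegral.integral_const_mul] at e2
    simp only [smul_eq_mul] at e2
    linarith [e1, e2]
  -- splitting
  have FG : ∀ b : ℝ, 0 ≤ b → b ≤ 1 →
      (∫ t in (0:ℝ)..b, f t) + (∫ t in b..(1:ℝ), f t) = ∫ t in (0:ℝ)..(1:ℝ), f t := by
    intro b hb hb1
    exact intervalIntegral.integral_add_adjacent_intervals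
      (hint 0 b ⟨le_refl 0, by norm_num⟩ ⟨hb, hb1⟩)
      (hint b 1 ⟨hb, hb1⟩ ⟨by norm_num, le_refl 1⟩)
  -- middle third
  have hmid : (∫ t in (1/3:ℝ)..(2/3:ℝ), f t) = (1/9) * (1 + ∫ t in (0:ℝ)..(1:ℝ), f t) := by
    have e1 : (∫ x in (0:ℝ)..(1:ℝ), f ((2-x)/3)) = 3 * ∫ t in (1/3:ℝ)..(2/3:ℝ), f t := by
      rw [integral_comp_sub_left (fun y => f (y/3)) 2]
      rw [integral_comp_div f (by norm_num : (3:ℝ) ≠ 0)]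
      norm_num [smul_eq_mul]
    have e2 : (∫ x in (0:ℝ)..(1:ℝ), f ((2-x)/3))
        = ∫ x in (0:ℝ)..(1:ℝ), (1/3) * (1 + f x) := by
      apply intervalIntegral.integral_congr
      intro x hx
      rw [Set.uIcc_of_le (by norm_num : (0:ℝ) ≤ 1)] at hx
      exact hw2 x hx
    have hint' : IntervalIntegrable (fun x => 1 + f x) MeasureTheory.volume 0 1 :=
      (_root_.intervalIntegrable_const).add (hint 0 1 ⟨le_refl 0, by norm_num⟩ ⟨by norm_num, le_refl 1⟩)
    rw [intervalIntegral.integral_const_mul,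
      intervalIntegral.integral_add (_root_.intervalIntegrable_const)
        (hint 0 1 ⟨le_refl 0, by norm_num⟩ ⟨by norm_num, le_refl 1⟩),
      intervalIntegral.integral_const] at e2
    simp only [smul_eq_mul] at e2
    linarith [e1, e2]
  -- total integral = 1/2
  have hS : (∫ t in (0:ℝ)..(1:ℝ), f t) = 1/2 := by
    have split1 : (∫ t in (0:ℝ)..(1/3:ℝ), f t) + (∫ t in (1/3:ℝ)..(1:ℝ), f t)
        = ∫ t in (0:ℝ)..(1:ℝ), f t :=
      intervalIntegral.integral_add_adjacent_intervals
        (hint 0 (1/3) ⟨le_refl 0, by norm_num⟩ ⟨by norm_num, by norm_num⟩)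
        (hint (1/3) 1 ⟨by norm_num, by norm_num⟩ ⟨by norm_num, le_refl 1⟩)
    have split2 : (∫ t in (1/3:ℝ)..(2/3:ℝ), f t) + (∫ t in (2/3:ℝ)..(1:ℝ), f t)
        = ∫ t in (1/3:ℝ)..(1:ℝ), f t :=
      intervalIntegral.integral_add_adjacent_intervals
        (hint (1/3) (2/3) ⟨by norm_num, by norm_num⟩ ⟨by norm_num, by norm_num⟩)
        (hint (2/3) 1 ⟨by norm_num, by norm_num⟩ ⟨by norm_num, le_refl 1⟩)
    have e1 : (∫ t in (0:ℝ)..(1/3:ℝ), f t) = (2/9) * ∫ t in (0:ℝ)..(1:ℝ), f t := by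
      have := FA (1/3) (by norm_num) (by norm_num)
      norm_num at this
      exact this
    have e3 : (∫ t in (2/3:ℝ)..(1:ℝ), f t) = (1/3)/3 + (2/9) * ∫ t in (0:ℝ)..(1:ℝ), f t := by
      have := GB (1/3) (by norm_num) (by norm_num)
      norm_num at this ⊢
      exact this
    linarith [hmid, split1, split2, e1, e3]
  -- iterated scaling
  have FAn : ∀ (n : ℕ) (b : ℝ), 0 ≤ b → 3^n * b ≤ 1 →
      (∫ t in (0:ℝ)..b, f t) = (2/9)^n * ∫ t in (0:ℝ)..(3^n * b), f t := by
    intro n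
    induction n with
    | zero => intro b hb hb1; norm_num
    | succ n ih =>
      intro b hb hb1
      have h3 : (0:ℝ) < 3 ^ n := by positivity
      have hbig : (3:ℝ) * b ≤ 3^(n+1) * b := by
        apply mul_le_mul_of_nonneg_right _ hb
        calc (3:ℝ) = 3^1 := by norm_num
        _ ≤ 3^(n+1) := by apply pow_le_pow_right₀ (by norm_num) (by omega)
      have hb3 : 3 * b ≤ 1 := le_trans hbig hb1
      have h1' := FA b hb hb3
      have h2' := ih (3*b) (by linarith)
        (by rw [show (3:ℝ)^n * (3*b) = 3^(n+1)*b by ring]; exact hb1)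
      rw [h1', h2', show (3:ℝ)^n * (3*b) = 3^(n+1)*b by ring]
      ring
  have GBn : ∀ (n : ℕ) (b : ℝ), 0 ≤ b → 3^n * b ≤ 1 →
      (∫ t in (1-b)..(1:ℝ), f t)
        = b * (1 - (2/3)^n) + (2/9)^n * ∫ t in (1-3^n*b)..(1:ℝ), f t := by
    intro n
    induction n with
    | zero => intro b hb hb1; norm_num
    | succ n ih =>
      intro b hb hb1
      have h3 : (0:ℝ) < 3 ^ n := by positivity
      have hbig : (3:ℝ) * b ≤ 3^(n+1) * b := by
        apply mul_le_mul_of_nonneg_right _ hb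
        calc (3:ℝ) = 3^1 := by norm_num
        _ ≤ 3^(n+1) := by apply pow_le_pow_right₀ (by norm_num) (by omega)
      have hb3 : 3 * b ≤ 1 := le_trans hbig hb1
      have h1' := GB b hb hb3
      have h2' := ih (3*b) (by linarith)
        (by rw [show (3:ℝ)^n * (3*b) = 3^(n+1)*b by ring]; exact hb1)
      rw [h1', h2', show (3:ℝ)^n * (3*b) = 3^(n+1)*b by ring]
      ring
  -- main computation
  intro i hi
  obtain ⟨n, rfl⟩ : ∃ n, i = n + 1 := ⟨i-1, by omega⟩
  rw [show n+1-1 = n from rfl]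
  set P : ℝ := (3:ℝ)^n with hPdef
  have hP : (0:ℝ) < P := by positivity
  have hP1 : (1:ℝ) ≤ P := one_le_pow₀ (by norm_num)
  set a : ℝ := 1/((3:ℝ)^(n+1)+1) with hadef
  have h3n1 : (3:ℝ)^(n+1) = 3*P := by rw [pow_succ]; ring
  have hden0 : (0:ℝ) < 3*P+1 := by linarith
  have ha' : a = 1/(3*P+1) := by rw [hadef, h3n1]
  have hapos : 0 < a := by rw [ha']; positivity
  have hPa : P * a = P/(3*P+1) := by rw [ha']; ring
  have hPa1 : 3^n * a ≤ 1 := by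
    rw [← hPdef, hPa, div_le_one hden0]; linarith
  have hPa3 : 3 * (3^n * a) ≤ 1 := by
    rw [← hPdef, hPa]
    rw [show (3:ℝ) * (P/(3*P+1)) = (3*P)/(3*P+1) by ring, div_le_one hden0]
    linarith
  have h3c : 3 * ((3:ℝ)^n * a) = 1 - a := by
    rw [← hPdef, ha']; field_simp; ring
  have hPa0 : (0:ℝ) ≤ 3^n * a := by positivity
  have ha1 : a ≤ 1 := by rw [ha']; rw [div_le_one hden0]; linarith
  -- the six linear equations
  have E1 := FAn n a (le_of_lt hapos) hPa1
  have E2 := FA ((3:ℝ)^n * a) hPa0 hPa3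
  rw [h3c] at E2
  have E4 := FG (1-a) (by linarith) (by linarith)
  rw [hS] at E4
  have E5 := GBn n a (le_of_lt hapos) hPa1
  have E6 := GB ((3:ℝ)^n * a) hPa0 hPa3
  rw [h3c, show (1:ℝ)-(1-a) = a by ring] at E6
  have E7 := FG a (le_of_lt hapos) ha1
  rw [hS] at E7
  set I : ℝ := ∫ t in (0:ℝ)..a, f t with hI
  have e7' : (∫ t in a..(1:ℝ), f t) = 1/2 - I := by linarith
  rw [e7'] at E6
  rw [E6] at E5
  have e4' : (∫ t in (0:ℝ)..(1-a), f t) = 1/2 - ∫ t in (1-a)..(1:ℝ), f t := by linarith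
  rw [e4', E5] at E2
  rw [E2] at E1
  -- E1 : I = (2/9)^n * ((2/9) * (1/2 - (a*(1-(2/3)^n) + (2/9)^n * ((3^n*a)/3 + (2/9)*(1/2-I)))))
  -- target value
  set T : ℝ := 2 ^ n / 9 ^ (n+1) * ((3 ^ (n+1) - 1) / (3 ^ (n+1) + 1)) * (1 / (1 - (2/9) ^ (n+1))) with hT
  show I = T
  set Q : ℝ := (2:ℝ)^n with hQdef
  have hQ : (0:ℝ) < Q := by positivity
  have hQP : Q ≤ P := by
    rw [hQdef, hPdef]; exact pow_le_pow_left₀ (by norm_num) (by norm_num) n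
  have e29 : ((2:ℝ)/9)^n = Q/(P*P) := by
    rw [div_pow, hQdef, hPdef, show ((9:ℝ))^n = 3^n*3^n by rw [show (9:ℝ) = 3*3 by norm_num, mul_pow]]
  have e23 : ((2:ℝ)/3)^n = Q/P := by rw [div_pow]
  have e9s : (9:ℝ)^(n+1) = 9*(P*P) := by
    rw [pow_succ, show ((9:ℝ))^n = 3^n*3^n by rw [show (9:ℝ) = 3*3 by norm_num, mul_pow], ← hPdef]; ring
  have e29s : ((2:ℝ)/9)^(n+1) = (2/9)*(Q/(P*P)) := by rw [pow_succ, e29]; ring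
  have hdenom : (0:ℝ) < 1 - (2/9)*(Q/(P*P)) := by
    have h1 : Q/(P*P) ≤ 1 := by
      rw [div_le_one (by positivity)]
      nlinarith
    have h2 : 0 < Q/(P*P) := by positivity
    nlinarith
  have hTlin : T = (2/9)^n * ((2/9) * (1/2 - (a*(1-(2/3)^n) + (2/9)^n * ((3^n*a)/3 + (2/9)*(1/2-T))))) := by
    have hne1 : (3*P+1) ≠ 0 := ne_of_gt hden0
    have hne2 : P ≠ 0 := ne_of_gt hP
    have hpos2 : (0:ℝ) < 9*(P*P) - 2*Q := by nlinarith
    have hne4 : (9*(P*P) - 2*Q) ≠ 0 := ne_of_gt hpos2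
    have hsub : (1:ℝ) - (2/9)*(Q/(P*P)) = (9*(P*P)-2*Q)/(9*(P*P)) := by
      field_simp
    have hTval : T = (Q * (3*P-1)) / ((3*P+1) * (9*(P*P) - 2*Q)) := by
      rw [hT, e9s, h3n1, e29s, hsub, one_div, inv_div]
      field_simp
    rw [hTval, e29, e23, ← hPdef, ha']
    have hne5 : P ^ 2 * 9 - Q * 2 ≠ 0 := by nlinarith
    field_simp
    ring
  have hd : I - T = ((2/9)^n)^2 * (2/9)^2 * (I - T) := by linear_combination E1 - hTlin
  have h29 : (0:ℝ) ≤ (2/9:ℝ)^n := by positivity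
  have h29' : (2/9:ℝ)^n ≤ 1 := pow_le_one₀ (by norm_num) (by norm_num)
  have hne : (1:ℝ) - ((2/9:ℝ)^n)^2 * (2/9)^2 ≠ 0 := by nlinarith
  have hz : (1 - ((2/9:ℝ)^n)^2 * (2/9)^2) * (I - T) = 0 := by linear_combination hd
  rcases mul_eq_zero.mp hz with h | h
  · exact absurd h hne
  · linarith
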